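/- No acyclic hypergraph is dense, i.e., every acyclic hypergraph H satisfies ‖H‖ > 2[H], where ‖H‖ is the number of vertices and [H] the number of hyperedges. -/

import Mathlib

variable {V : Type*} [DecidableEq V] [Fintype V]

/-- The weight of a vertex set `X`: the number of hyperedges contained in `X`. -/
def hWeight (T : Finset (Finset V)) (X : Finset V) : ℕ :=
  (T.filter (· ⊆ X)).card

/-- A vertex set `X` is dense if `‖X‖ ≤ 2[X]`. -/
def HDense (T : Finset (Finset V)) (X : Finset V) : Prop :=
  X.card ≤ 2 * hWeight T X

/-- A vertex set `X` is super-dense (immodest) if `‖X‖ < 2[X]`. -/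
def HSuperDense (T : Finset (Finset V)) (X : Finset V) : Prop :=
  X.card < 2 * hWeight T X

/-- A hypergraph is `l`-meager if it has no (nonempty) dense vertex set of cardinality `≤ 2l`. -/
def HMeager (T : Finset (Finset V)) (l : ℕ) : Prop :=
  ∀ X : Finset V, X.Nonempty → X.card ≤ 2 * l → ¬ HDense T X

/-- A hypergraph is `l`-modest if it has no super-dense vertex set of cardinality `≤ 2l`. -/
def HModest (T : Finset (Finset V)) (l : ℕ) : Prop :=
  ∀ X : Finset V, X.card ≤ 2 * l → ¬ HSuperDense T X

/-- Vertices `x` and `y` are adjacent if some hyperedge contains both. -/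
def Adjacent (T : Finset (Finset V)) (x y : V) : Prop :=
  x ≠ y ∧ ∃ h ∈ T, x ∈ h ∧ y ∈ h

/-- A weak cycle: `k ≥ 3` distinct vertices (indices mod `k`, cyclic successor given
by `finRotate`), consecutive vertices adjacent, and either `k > 3` or (`k = 3` and)
the set of the three vertices is not a hyperedge. -/
def IsWeakCycle (T : Finset (Finset V)) {k : ℕ} (x : Fin k → V) : Prop :=
  3 ≤ k ∧ Function.Injective x ∧
    (∀ i : Fin k, Adjacent T (x i) (x (finRotate k i))) ∧
    (3 < k ∨ Finset.univ.image x ∉ T)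

/-- A cycle: either a cycle of length `k ≥ 3` (a weak cycle with no consecutive triple
forming a hyperedge), or a cycle of length `2` (two vertices lying in two distinct
hyperedges whose witnesses are distinct and different from the two vertices). -/
def IsCycle (T : Finset (Finset V)) {k : ℕ} (x : Fin k → V) : Prop :=
  (3 ≤ k ∧ IsWeakCycle T x ∧
    ∀ i : Fin k,
      ({x i, x (finRotate k i), x (finRotate k (finRotate k i))} : Finset V) ∉ T)
  ∨ (k = 2 ∧ Function.Injective x ∧ ∃ y₁ y₂ : V, y₁ ≠ y₂ ∧ (∀ i, y₁ ≠ x i) ∧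
      (∀ i, y₂ ≠ x i) ∧ insert y₁ (Finset.univ.image x) ∈ T ∧
      insert y₂ (Finset.univ.image x) ∈ T)

/-- A hypergraph is acyclic if it has no cycles (of any length). -/
def Acyclic (T : Finset (Finset V)) : Prop :=
  ∀ (k : ℕ) (x : Fin k → V), ¬ IsCycle T x

set_option linter.unusedSectionVars false

lemma two_le_card_inter (s t : Finset V) {a b : V} (ha : a ∈ s) (ha' : a ∈ t)
    (hb : b ∈ s) (hb' : b ∈ t) (hab : a ≠ b) : 2 ≤ (s ∩ t).card :=
  Finset.one_lt_card.2 ⟨a, Finset.mem_inter.2 ⟨ha, ha'⟩, b, Finset.mem_inter.2 ⟨hb, hb'⟩, hab⟩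

lemma triple_eq {h : Finset V} {y a b : V} (hcard : h.card = 3) (hy : y ∈ h)
    (ha : a ∈ h) (hb : b ∈ h) (hya : y ≠ a) (hyb : y ≠ b) (hab : a ≠ b) :
    ({y, a, b} : Finset V) = h := by
  apply Finset.eq_of_subset_of_card_le
  · intro z hz; simp at hz; rcases hz with rfl | rfl | rfl <;> assumption
  · rw [hcard, Finset.card_insert_of_notMem (by simp [hya, hyb]),
      Finset.card_insert_of_notMem (by simpa), Finset.card_singleton]

lemma pair_inj {a b : V} (hab : a ≠ b) : Function.Injective ![a, b] := by
  intro i j hij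
  fin_cases i <;> fin_cases j <;>
    simp only [Matrix.cons_val_zero, Matrix.cons_val_one, Matrix.head_cons] at hij <;>
    first
      | rfl
      | exact absurd hij hab
      | exact absurd hij.symm hab

lemma inter_le_one (T : Finset (Finset V)) (hT : ∀ h ∈ T, h.card = 3)
    (hac : Acyclic T) : ∀ h₁ ∈ T, ∀ h₂ ∈ T, h₁ ≠ h₂ → (h₁ ∩ h₂).card ≤ 1 := by
  intro h₁ hm₁ h₂ hm₂ hne
  by_contra hc
  push_neg at hc
  obtain ⟨a, ha, b, hb, hab⟩ := Finset.one_lt_card.1 hc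
  simp only [Finset.mem_inter] at ha hb
  have hsub1 : ({a, b} : Finset V) ⊆ h₁ := by
    intro z hz; simp at hz; rcases hz with rfl | rfl; exacts [ha.1, hb.1]
  have hsub2 : ({a, b} : Finset V) ⊆ h₂ := by
    intro z hz; simp at hz; rcases hz with rfl | rfl; exacts [ha.2, hb.2]
  have hab2 : ({a, b} : Finset V).card = 2 := by
    rw [Finset.card_insert_of_notMem (by simpa), Finset.card_singleton]
  have h1ne : (h₁ \ {a, b}).Nonempty := by
    rw [← Finset.card_pos, Finset.card_sdiff_of_subset hsub1, hT h₁ hm₁, hab2]; norm_num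
  have h2ne : (h₂ \ {a, b}).Nonempty := by
    rw [← Finset.card_pos, Finset.card_sdiff_of_subset hsub2, hT h₂ hm₂, hab2]; norm_num
  obtain ⟨y₁, hy₁⟩ := h1ne
  obtain ⟨y₂, hy₂⟩ := h2ne
  rw [Finset.mem_sdiff] at hy₁ hy₂
  simp only [Finset.mem_insert, Finset.mem_singleton, not_or] at hy₁ hy₂
  have e1 : ({y₁, a, b} : Finset V) = h₁ :=
    triple_eq (hT h₁ hm₁) hy₁.1 ha.1 hb.1 hy₁.2.1 hy₁.2.2 hab
  have e2 : ({y₂, a, b} : Finset V) = h₂ :=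
    triple_eq (hT h₂ hm₂) hy₂.1 ha.2 hb.2 hy₂.2.1 hy₂.2.2 hab
  have hy12 : y₁ ≠ y₂ := by
    rintro rfl; exact hne (e1 ▸ e2 ▸ rfl)
  have himg : Finset.univ.image ![a, b] = {a, b} := by
    ext z
    simp [Fin.exists_fin_two, eq_comm]
  apply hac 2 ![a, b]
  refine Or.inr ⟨rfl, pair_inj hab, y₁, y₂, hy12, ?_, ?_, ?_, ?_⟩
  · intro i; fin_cases i <;> simp [hy₁.2.1, hy₁.2.2]
  · intro i; fin_cases i <;> simp [hy₂.2.1, hy₂.2.2]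
  · rw [himg]; exact e1 ▸ hm₁
  · rw [himg]; exact e2 ▸ hm₂

lemma acyclic_anti {T T' : Finset (Finset V)} (hT : ∀ h ∈ T, h.card = 3)
    (hsub : T' ⊆ T) (hac : Acyclic T) : Acyclic T' := by
  intro k x hcyc
  rcases hcyc with ⟨hk3, ⟨_, hinj, hadj, hwk⟩, htri⟩ | ⟨hk2, hinj, y₁, y₂, h12, hy1, hy2, hm1, hm2⟩
  · -- transfer to T
    have htriT : ∀ i : Fin k,
        ({x i, x (finRotate k i), x (finRotate k (finRotate k i))} : Finset V) ∉ T := by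
      intro i ht
      obtain ⟨hne1, f, hf, hxf, hxf'⟩ := hadj i
      by_cases hteq : ({x i, x (finRotate k i), x (finRotate k (finRotate k i))} : Finset V) = f
      · exact htri i (hteq ▸ hf)
      · have h2 := two_le_card_inter
          {x i, x (finRotate k i), x (finRotate k (finRotate k i))} f (a := x i)
          (b := x (finRotate k i)) (by simp) hxf (by simp) hxf' hne1
        have := inter_le_one T hT hac _ ht f (hsub hf) hteq
        omega
    have hadjT : ∀ i : Fin k, Adjacent T (x i) (x (finRotate k i)) := by
      intro i
      obtain ⟨hne1, f, hf, hxf, hxf'⟩ := hadj i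
      exact ⟨hne1, f, hsub hf, hxf, hxf'⟩
    have hwkT : 3 < k ∨ Finset.univ.image x ∉ T := by
      rcases lt_or_eq_of_le hk3 with h | h
      · exact Or.inl h
      · refine Or.inr ?_
        subst h
        have h0 : finRotate 3 (0 : Fin 3) = 1 := by decide
        have h1 : finRotate 3 (1 : Fin 3) = 2 := by decide
        have himg : Finset.univ.image x = {x 0, x (finRotate 3 0), x (finRotate 3 (finRotate 3 0))} := by
          rw [h0, h1]
          have : (Finset.univ : Finset (Fin 3)) = {0, 1, 2} := by decide
          rw [this]
          simp [Finset.image_insert]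
        rw [himg]
        exact htriT 0
    exact hac k x (Or.inl ⟨hk3, ⟨hk3, hinj, hadjT, hwkT⟩, htriT⟩)
  · exact hac k x (Or.inr ⟨hk2, hinj, y₁, y₂, h12, hy1, hy2, hsub hm1, hsub hm2⟩)

structure EdgeCycle (T : Finset (Finset V)) (m : ℕ) : Type _ where
  E : Fin (m + 1) → Finset V
  W : Fin (m + 1) → V
  hk : 1 ≤ m
  hET : ∀ i, E i ∈ T
  hEinj : Function.Injective E
  hWinj : Function.Injective W
  hW1 : ∀ i, W i ∈ E i
  hW2 : ∀ i, W i ∈ E (i + 1)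

lemma no_edgeCycle (T : Finset (Finset V)) (hT : ∀ h ∈ T, h.card = 3)
    (hac : Acyclic T) (m : ℕ) (C : EdgeCycle T m) : False := by
  obtain ⟨E, W, hk, hET, hEinj, hWinj, hW1, hW2⟩ := C
  have hone : ∀ h₁ ∈ T, ∀ h₂ ∈ T, h₁ ≠ h₂ → (h₁ ∩ h₂).card ≤ 1 := inter_le_one T hT hac
  rcases Nat.lt_or_ge m 2 with hk3 | hk3
  · -- m = 1
    have hk2 : m = 1 := by omega
    subst hk2
    have h01 : W 0 ≠ W 1 := fun h => absurd (hWinj h) (by decide)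
    have hE01 : E 0 ≠ E 1 := fun h => absurd (hEinj h) (by decide)
    have h1 : W 0 ∈ E 1 := by
      have := hW2 0
      rwa [show (0 + 1 : Fin (1 + 1)) = 1 by decide] at this
    have h2' : W 1 ∈ E 0 := by
      have := hW2 1
      rwa [show (1 + 1 : Fin (1 + 1)) = 0 by decide] at this
    have := two_le_card_inter _ _ (hW1 0) h1 h2' (hW1 1) h01
    have := hone _ (hET 0) _ (hET 1) hE01
    omega
  · -- m ≥ 2, length m+1 ≥ 3
    obtain ⟨m, rfl⟩ : ∃ m', m = m' + 2 := ⟨m - 2, by omega⟩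
    have hone_ne : ∀ (i : Fin (m + 3)), i ≠ i + 1 := by
      intro i h
      have h1 : (1 : Fin (m + 3)) = 0 := by
        have := left_eq_add.1 h
        exact this
      have : ((1 : Fin (m + 3)) : ℕ) = 0 := by rw [h1]; rfl
      simp [Fin.val_one] at this
    have hplus : ∀ (i : Fin (m + 3)), i + 2 = (i + 1) + 1 := by
      intro i
      rw [add_assoc]; congr 1
    have htwo_ne : ∀ (i : Fin (m + 3)), i + 1 ≠ i + 2 := by
      intro i h
      exact hone_ne (i + 1) (by rw [← hplus]; exact h)
    -- the triple condition
    have htri : ∀ i : Fin (m + 3), ({W i, W (i + 1), W (i + 2)} : Finset V) ∉ T := by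
      intro i ht
      have hii : W i ≠ W (i + 1) := fun h => hone_ne i (hWinj h)
      have hii2 : W (i + 1) ≠ W (i + 2) := fun h => htwo_ne i (hWinj h)
      have ha1 : W i ∈ E (i + 1) := hW2 i
      have ha2 : W (i + 1) ∈ E (i + 1) := hW1 (i + 1)
      have hb1 : W (i + 1) ∈ E (i + 2) := by
        have := hW2 (i + 1)
        rwa [← hplus] at this
      have hb2 : W (i + 2) ∈ E (i + 2) := hW1 (i + 2)
      have e1 : ({W i, W (i + 1), W (i + 2)} : Finset V) = E (i + 1) := by
        by_contra hne
        have := two_le_card_inter {W i, W (i + 1), W (i + 2)} (E (i + 1))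
          (a := W i) (b := W (i + 1)) (by simp) ha1 (by simp) ha2 hii
        have := hone _ ht _ (hET (i + 1)) hne
        omega
      have e2 : ({W i, W (i + 1), W (i + 2)} : Finset V) = E (i + 2) := by
        by_contra hne
        have := two_le_card_inter {W i, W (i + 1), W (i + 2)} (E (i + 2))
          (a := W (i + 1)) (b := W (i + 2)) (by simp) hb1 (by simp) hb2 hii2
        have := hone _ ht _ (hET (i + 2)) hne
        omega
      exact htwo_ne i (hEinj (e1 ▸ e2))
    have hadj : ∀ i : Fin (m + 3), Adjacent T (W i) (W (i + 1)) :=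
      fun i => ⟨fun h => hone_ne i (hWinj h), E (i + 1), hET (i + 1), hW2 i, hW1 (i + 1)⟩
    apply hac (m + 3) W
    left
    have hrot : ∀ i : Fin (m + 3), finRotate (m + 3) i = i + 1 := fun i => finRotate_succ_apply i
    refine ⟨by omega, ⟨by omega, hWinj, ?_, ?_⟩, ?_⟩
    · intro i; rw [hrot]; exact hadj i
    · rcases Nat.lt_or_ge 3 (m + 3) with h | h
      · exact Or.inl h
      · right
        have hm0 : m = 0 := by omega
        subst hm0
        intro hmem
        apply htri 0
        have h0 : (0 : Fin 3) + 1 = 1 := by decide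
        have h1 : (0 : Fin 3) + 2 = 2 := by decide
        rw [h0, h1]
        have : (Finset.univ : Finset (Fin 3)) = {0, 1, 2} := by decide
        rw [this] at hmem
        simpa [Finset.image_insert] using hmem
    · intro i
      rw [hrot, hrot, ← hplus]
      exact htri i

def IsPath (T : Finset (Finset V)) (n : ℕ) (e : Fin (n + 1) → Finset V) (v : Fin n → V) : Prop :=
  (∀ i, e i ∈ T) ∧ Function.Injective e ∧ Function.Injective v ∧
    (∀ i : Fin n, v i ∈ e i.castSucc ∧ v i ∈ e i.succ)

def cycleOfPath {T : Finset (Finset V)} {n : ℕ} {e : Fin (n + 1) → Finset V}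
    {v : Fin n → V} (hp : IsPath T n e v) {p q : ℕ} (hpq : p < q) (hq : q ≤ n)
    {a : V} (hap : a ∈ e ⟨p, by omega⟩) (haq : a ∈ e ⟨q, by omega⟩)
    (hav : ∀ i : Fin n, p ≤ i.val → i.val < q → a ≠ v i) :
    EdgeCycle T (q - p) := by
  obtain ⟨heT, heinj, hvinj, hve⟩ := hp
  refine ⟨fun i => e ⟨p + i.val, by omega⟩,
          fun i => if h : i.val < q - p then v ⟨p + i.val, by omega⟩ else a,
          by omega, fun i => heT _, ?_, ?_, ?_, ?_⟩
  · intro i j hij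
    have := heinj hij
    have : p + i.val = p + j.val := congrArg Fin.val this
    exact Fin.ext (by omega)
  · intro i j hij
    simp only at hij
    by_cases hi : i.val < q - p <;> by_cases hj : j.val < q - p <;>
      simp only [hi, hj, dif_pos, dif_neg, dite_true, dite_false] at hij
    · have := hvinj hij
      have : p + i.val = p + j.val := congrArg Fin.val this
      exact Fin.ext (by omega)
    · exact absurd hij.symm (hav ⟨p + i.val, by omega⟩
        (show p ≤ p + i.val by omega) (show p + i.val < q by omega))
    · exact absurd hij (hav ⟨p + j.val, by omega⟩
        (show p ≤ p + j.val by omega) (show p + j.val < q by omega))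
    · have hi' : i.val = q - p := by omega
      have hj' : j.val = q - p := by omega
      exact Fin.ext (by omega)
  · intro i
    by_cases hi : i.val < q - p
    · simp only [hi, dif_pos]
      have := (hve ⟨p + i.val, by omega⟩).1
      simpa using this
    · simp only [hi, dif_neg, not_false_iff]
      have hi' : i.val = q - p := by omega
      have : (⟨p + i.val, by omega⟩ : Fin (n + 1)) = ⟨q, by omega⟩ :=
        Fin.ext (show p + i.val = q by omega)
      rw [this]
      exact haq
  · intro i
    have hvadd : (i + 1).val = if i = Fin.last (q - p) then 0 else i.val + 1 := Fin.val_add_one i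
    by_cases hlast : i = Fin.last (q - p)
    · -- i is last: W i = a, E (i+1) = e p
      have hival : i.val = q - p := by rw [hlast]; rfl
      have h1 : ¬ (i.val < q - p) := by omega
      simp only [h1, dif_neg, not_false_iff]
      have : (i + 1).val = 0 := by rw [hvadd, if_pos hlast]
      have heq : (⟨p + (i + 1).val, by omega⟩ : Fin (n + 1)) = ⟨p, by omega⟩ := Fin.ext (by simp [this])
      rw [heq]
      exact hap
    · have hival : i.val < q - p := by
        have := i.isLt
        have : i.val ≠ q - p := fun h => hlast (Fin.ext h)
        omega
      simp only [hival, dif_pos]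
      have hsucc : (i + 1).val = i.val + 1 := by rw [hvadd, if_neg hlast]
      have heq : (⟨p + (i + 1).val, by omega⟩ : Fin (n + 1))
          = (⟨p + i.val, by omega⟩ : Fin n).succ :=
        Fin.ext (show p + (i + 1).val = p + i.val + 1 by rw [hsucc]; omega)
      rw [heq]
      exact (hve ⟨p + i.val, by omega⟩).2

lemma snoc_inj {α : Type*} {n : ℕ} {f : Fin n → α} {x : α} (hf : Function.Injective f)
    (hx : ∀ i, x ≠ f i) : Function.Injective (Fin.snoc f x : Fin (n + 1) → α) := by
  intro i j hij
  rcases Fin.eq_castSucc_or_eq_last i with ⟨i', rfl⟩ | rfl <;>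
    rcases Fin.eq_castSucc_or_eq_last j with ⟨j', rfl⟩ | rfl <;>
    simp only [Fin.snoc_castSucc, Fin.snoc_last] at hij
  · rw [hf hij]
  · exact absurd hij.symm (hx i')
  · exact absurd hij (hx j')
  · rfl

lemma exists_leaf (T : Finset (Finset V)) (hT : ∀ h ∈ T, h.card = 3)
    (hac : Acyclic T) (hne : T.Nonempty) :
    ∃ h ∈ T, (((T.erase h).biUnion id) ∩ h).card ≤ 1 := by
  classical
  by_contra hcon
  push_neg at hcon
  set P : ℕ → Prop := fun n => ∃ e : Fin (n + 1) → Finset V, ∃ v : Fin n → V, IsPath T n e v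
    with hPdef
  have hP0 : P 0 :=
    ⟨fun _ => hne.choose, Fin.elim0, fun _ => hne.choose_spec,
      fun i j _ => Fin.ext (by omega), fun i => i.elim0, fun i => i.elim0⟩
  have hbound : ∀ n, P n → n + 1 ≤ T.card := by
    intro n ⟨e, v, heT, heinj, _, _⟩
    calc n + 1 = (Finset.univ : Finset (Fin (n + 1))).card := by simp
    _ ≤ T.card := Finset.card_le_card_of_injOn e (fun i _ => heT i) heinj.injOn
  set n := Nat.findGreatest P T.card with hndef
  have hPn : P n := Nat.findGreatest_spec (Nat.zero_le _) hP0
  have hnsucc : ¬ P (n + 1) := by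
    intro hp
    have h1 : n + 1 ≤ T.card := by have := hbound (n + 1) hp; omega
    have := Nat.le_findGreatest h1 hp
    omega
  obtain ⟨e, v, heT, heinj, hvinj, hve⟩ := hPn
  set h := e (Fin.last n) with hhdef
  have hcard := hcon h (heT _)
  obtain ⟨a, ha, b, hb, hab⟩ := Finset.one_lt_card.1 hcard
  rw [Finset.mem_inter] at ha hb
  have hkey : ∃ c fc, c ∈ h ∧ fc ∈ T ∧ fc ≠ h ∧ c ∈ fc ∧
      ∀ (hn : 0 < n), c ≠ v ⟨n - 1, Nat.sub_lt hn one_pos⟩ := by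
    obtain ⟨fa, hfa, hafa⟩ := Finset.mem_biUnion.1 ha.1
    obtain ⟨fb, hfb, hbfb⟩ := Finset.mem_biUnion.1 hb.1
    rw [Finset.mem_erase] at hfa hfb
    by_cases hn : 0 < n
    · by_cases hca : a ≠ v ⟨n - 1, Nat.sub_lt hn one_pos⟩
      · exact ⟨a, fa, ha.2, hfa.2, hfa.1, hafa, fun _ => hca⟩
      · push_neg at hca
        refine ⟨b, fb, hb.2, hfb.2, hfb.1, hbfb, fun _ => fun heq => hab ?_⟩
        rw [hca, ← heq]
    · exact ⟨a, fa, ha.2, hfa.2, hfa.1, hafa, fun h0 => absurd h0 hn⟩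
  obtain ⟨c, fc, hch, hfcT, hfch, hcfc, hclast⟩ := hkey
  have hpath : IsPath T n e v := ⟨heT, heinj, hvinj, hve⟩
  by_cases hcv : ∃ j : Fin n, c = v j
  · obtain ⟨j, hj⟩ := hcv
    have hn : 0 < n := j.pos
    have hjne : j.val ≠ n - 1 := fun hh => hclast hn (hj.trans (congrArg v (Fin.ext hh)))
    have hjlt : j.val + 1 < n := by have := j.isLt; omega
    have hcp : c ∈ e ⟨j.val + 1, by omega⟩ := by rw [hj]; exact (hve j).2
    have hcq : c ∈ e ⟨n, by omega⟩ := hch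
    have hav : ∀ i : Fin n, j.val + 1 ≤ i.val → i.val < n → c ≠ v i := by
      intro i h1 _ heq
      have := congrArg Fin.val (hvinj (hj.symm.trans heq))
      omega
    exact no_edgeCycle T hT hac _ (cycleOfPath hpath hjlt (le_refl n) hcp hcq hav)
  · push_neg at hcv
    by_cases hce : ∃ i : Fin (n + 1), fc = e i
    · obtain ⟨i, hi⟩ := hce
      have hine : i.val ≠ n := fun hh => hfch (hi.trans (congrArg e (Fin.ext hh)))
      have hilt : i.val < n := by have := i.isLt; omega
      have hcp : c ∈ e ⟨i.val, by omega⟩ := by rw [hi] at hcfc; exact hcfc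
      have hcq : c ∈ e ⟨n, by omega⟩ := hch
      exact no_edgeCycle T hT hac _
        (cycleOfPath hpath hilt (le_refl n) hcp hcq (fun i' _ _ => hcv i'))
    · push_neg at hce
      apply hnsucc
      refine ⟨Fin.snoc e fc, Fin.snoc v c, ?_, ?_, ?_, ?_⟩
      · intro i
        rcases Fin.eq_castSucc_or_eq_last i with ⟨i', rfl⟩ | rfl
        · rw [Fin.snoc_castSucc]; exact heT i'
        · rw [Fin.snoc_last]; exact hfcT
      · exact snoc_inj heinj (fun i heq => hce i heq)
      · exact snoc_inj hvinj (fun i heq => hcv i heq)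
      · intro i
        rcases Fin.eq_castSucc_or_eq_last i with ⟨j, rfl⟩ | rfl
        · constructor
          · simp only [Fin.snoc_castSucc]
            exact (hve j).1
          · simp only [Fin.succ_castSucc, Fin.snoc_castSucc]
            exact (hve j).2
        · constructor
          · simp only [Fin.snoc_castSucc, Fin.snoc_last]
            exact hch
          · simp only [Fin.succ_last, Fin.snoc_last]
            exact hcfc

lemma card_biUnion_ge : ∀ (T : Finset (Finset V)), (∀ h ∈ T, h.card = 3) → Acyclic T →
    T.Nonempty → 2 * T.card + 1 ≤ (T.biUnion id).card := by
  intro T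
  induction T using Finset.strongInduction with
  | _ T ih =>
    intro hT hac hne
    obtain ⟨h, hhT, hleaf⟩ := exists_leaf T hT hac hne
    have hsub : T.erase h ⊆ T := Finset.erase_subset _ _
    have hins : T = insert h (T.erase h) := (Finset.insert_erase hhT).symm
    have hbi : T.biUnion id = h ∪ (T.erase h).biUnion id := by
      conv_lhs => rw [hins]
      rw [Finset.biUnion_insert]
      rfl
    have hcard3 : h.card = 3 := hT h hhT
    have hunion : (h ∪ (T.erase h).biUnion id).card + (h ∩ (T.erase h).biUnion id).card
        = 3 + ((T.erase h).biUnion id).card := by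
      rw [Finset.card_union_add_card_inter, hcard3]
    have hle1 : (h ∩ (T.erase h).biUnion id).card ≤ 1 := by
      rw [Finset.inter_comm]; exact hleaf
    rcases (T.erase h).eq_empty_or_nonempty with he | hne'
    · have hT1 : T.card = 1 := by rw [hins, he]; simp
      rw [hbi, he]
      simp [hT1, hcard3]
    · have hss : T.erase h ⊂ T := Finset.erase_ssubset hhT
      have ih' := ih _ hss (fun g hg => hT g (hsub hg)) (acyclic_anti hT hsub hac) hne'
      have hc' : (T.erase h).card = T.card - 1 := Finset.card_erase_of_mem hhT
      have hTpos : 1 ≤ T.card := Finset.card_pos.2 hne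
      rw [hbi]
      omega

/-- No acyclic hypergraph is dense: every acyclic hypergraph satisfies
`‖H‖ > 2[H]`, where `‖H‖` is the number of vertices and `[H]` the number of
hyperedges. -/
theorem stmt5 [Nonempty V] (T : Finset (Finset V)) (hT : ∀ h ∈ T, h.card = 3)
    (hacyclic : Acyclic T) :
    2 * T.card < Fintype.card V := by
  rcases T.eq_empty_or_nonempty with rfl | hne
  · simpa using Fintype.card_pos
  · have h1 := card_biUnion_ge T hT hacyclic hne
    have h2 : (T.biUnion id).card ≤ Fintype.card V := by
      rw [← Finset.card_univ]
      exact Finset.card_le_card (Finset.subset_univ _)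
    omega
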